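/- The sum trace on real vector spaces with direct sum fails the vanishing II axiom. Concretely, let f be the real 3×3 matrix [[1,1,0],[1,−2,1],[0,1,1/2]], viewed as a map ℝ⊕ℝ⊕ℝ → ℝ⊕ℝ⊕ℝ with a = b = u = v = 1. Then: (i) the series defining Tr_Σ^v(f) (tracing out the last coordinate) converges and Tr_Σ^v(f) = [[1,1],[1,0]]; (ii) Tr_Σ^u(Tr_Σ^v(f)) is defined and equals 2 (the 1×1 matrix (2)); but (iii) the series Σ_{n≥0} (1 0)·Mⁿ·(1 0)ᵀ with M = [[−2,1],[1,1/2]] does not converge, so Tr_Σ^{u+v}(f) (tracing out the last two coordinates simultaneously) is undefined. Hence Tr_Σ^{u+v}(f) is not Kleene-equal to Tr_Σ^u(Tr_Σ^v(f)), and the sum trace is not a partial trace. -/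

import Mathlib

open Filter Matrix

/-- The matrix `[[1,1,0],[1,−2,1],[0,1,1/2]]`, viewed as a map
`ℝ ⊕ (ℝ ⊕ ℝ) → ℝ ⊕ (ℝ ⊕ ℝ)`. -/
noncomputable def exMatrix :
    Matrix (Fin 1 ⊕ (Fin 1 ⊕ Fin 1)) (Fin 1 ⊕ (Fin 1 ⊕ Fin 1)) ℝ :=
  Matrix.of fun i j =>
    match i, j with
    | Sum.inl _, Sum.inl _ => 1
    | Sum.inl _, Sum.inr (Sum.inl _) => 1
    | Sum.inl _, Sum.inr (Sum.inr _) => 0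
    | Sum.inr (Sum.inl _), Sum.inl _ => 1
    | Sum.inr (Sum.inl _), Sum.inr (Sum.inl _) => -2
    | Sum.inr (Sum.inl _), Sum.inr (Sum.inr _) => 1
    | Sum.inr (Sum.inr _), Sum.inl _ => 0
    | Sum.inr (Sum.inr _), Sum.inr (Sum.inl _) => 1
    | Sum.inr (Sum.inr _), Sum.inr (Sum.inr _) => 1/2

/-- `exMatrix` viewed as a map `(ℝ ⊕ ℝ) ⊕ ℝ → (ℝ ⊕ ℝ) ⊕ ℝ` (for tracing out the last
coordinate only). -/
noncomputable def exMatrix' :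
    Matrix ((Fin 1 ⊕ Fin 1) ⊕ Fin 1) ((Fin 1 ⊕ Fin 1) ⊕ Fin 1) ℝ :=
  Matrix.reindex (Equiv.sumAssoc (Fin 1) (Fin 1) (Fin 1)).symm
    (Equiv.sumAssoc (Fin 1) (Fin 1) (Fin 1)).symm exMatrix

lemma ex'_b22 : exMatrix'.toBlocks₂₂ = ((1:ℝ)/2) • (1 : Matrix (Fin 1) (Fin 1) ℝ) := by
  ext i j
  fin_cases i; fin_cases j
  simp [exMatrix', exMatrix, Matrix.toBlocks₂₂, Matrix.one_apply]

lemma ex'_outer : exMatrix'.toBlocks₁₂ * exMatrix'.toBlocks₂₁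
    = Matrix.fromBlocks (0 : Matrix (Fin 1) (Fin 1) ℝ) 0 0 !![1] := by
  ext (i|i) (j|j) <;>
    simp [exMatrix', exMatrix, Matrix.toBlocks₁₂, Matrix.toBlocks₂₁,
      Matrix.mul_apply, Fin.sum_univ_one]

lemma ex'_term (n : ℕ) :
    exMatrix'.toBlocks₁₂ * exMatrix'.toBlocks₂₂ ^ n * exMatrix'.toBlocks₂₁
      = ((1:ℝ)/2) ^ n • Matrix.fromBlocks (0 : Matrix (Fin 1) (Fin 1) ℝ) 0 0 !![1] := by
  rw [ex'_b22, smul_pow, one_pow, Matrix.mul_smul, Matrix.mul_one, Matrix.smul_mul, ex'_outer]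

lemma M_sq : exMatrix.toBlocks₂₂ ^ 2
    = (-(3/2) : ℝ) • exMatrix.toBlocks₂₂ + (2:ℝ) • (1 : Matrix (Fin 1 ⊕ Fin 1) (Fin 1 ⊕ Fin 1) ℝ) := by
  ext (i|i) (j|j) <;>
    simp [exMatrix, Matrix.toBlocks₂₂, pow_two, Matrix.mul_apply,
      Fintype.sum_sum_type, Fin.sum_univ_one, Matrix.one_apply, eq_iff_true_of_subsingleton] <;>
    norm_num

lemma ex_term (n : ℕ) :
    (exMatrix.toBlocks₁₂ * exMatrix.toBlocks₂₂ ^ n * exMatrix.toBlocks₂₁) 0 0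
      = (exMatrix.toBlocks₂₂ ^ n) (Sum.inl 0) (Sum.inl 0) := by
  simp [exMatrix, Matrix.toBlocks₁₂, Matrix.toBlocks₂₁, Matrix.mul_apply,
    Fintype.sum_sum_type, Fin.sum_univ_one]

/-- The sum trace fails the vanishing II axiom: for
`f = [[1,1,0],[1,−2,1],[0,1,1/2]]`, (i) the sum trace over the last coordinate is
defined and equals `[[1,1],[1,0]]`; (ii) the sum trace over the middle coordinate of
the result is defined and equals `(2)`; but (iii) the sum trace over the last two
coordinates simultaneously is undefined. -/
theorem sum_trace_fails_vanishing_two :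
    -- (i)
    (∃ S : Matrix (Fin 1 ⊕ Fin 1) (Fin 1 ⊕ Fin 1) ℝ,
      Tendsto
        (fun N => ∑ n ∈ Finset.range N,
          exMatrix'.toBlocks₁₂ * exMatrix'.toBlocks₂₂ ^ n * exMatrix'.toBlocks₂₁)
        atTop (nhds S) ∧
      exMatrix'.toBlocks₁₁ + S = Matrix.fromBlocks !![1] !![1] !![1] !![0]) ∧
    -- (ii)
    (∃ S : Matrix (Fin 1) (Fin 1) ℝ,
      (let t : Matrix (Fin 1 ⊕ Fin 1) (Fin 1 ⊕ Fin 1) ℝ :=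
        Matrix.fromBlocks !![1] !![1] !![1] !![0]
       Tendsto
        (fun N => ∑ n ∈ Finset.range N,
          t.toBlocks₁₂ * t.toBlocks₂₂ ^ n * t.toBlocks₂₁) atTop (nhds S) ∧
       t.toBlocks₁₁ + S = !![(2 : ℝ)])) ∧
    -- (iii)
    ¬ ∃ S : Matrix (Fin 1) (Fin 1) ℝ,
      Tendsto
        (fun N => ∑ n ∈ Finset.range N,
          exMatrix.toBlocks₁₂ * exMatrix.toBlocks₂₂ ^ n * exMatrix.toBlocks₂₁)
        atTop (nhds S) := by
  refine ⟨?_, ?_, ?_⟩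
  · -- (i)
    set C : Matrix (Fin 1 ⊕ Fin 1) (Fin 1 ⊕ Fin 1) ℝ :=
      Matrix.fromBlocks 0 0 0 !![1] with hC
    refine ⟨(2:ℝ) • C, ?_, ?_⟩
    · have hg : HasSum (fun n : ℕ => ((1:ℝ)/2) ^ n) 2 := by
        have := hasSum_geometric_of_lt_one (r := (1:ℝ)/2) (by norm_num) (by norm_num)
        norm_num at this
        simpa using this
      have h := hg.tendsto_sum_nat.smul_const C
      refine h.congr fun N => ?_
      rw [Finset.sum_smul]
      exact Finset.sum_congr rfl fun n _ => (ex'_term n).symm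
    · ext (i|i) (j|j) <;>
        simp [hC, exMatrix', exMatrix, Matrix.toBlocks₁₁] <;> norm_num
  · -- (ii)
    refine ⟨!![(1:ℝ)], ?_, ?_⟩
    · have hterm : ∀ n : ℕ,
          (Matrix.fromBlocks !![1] !![1] !![1] !![(0:ℝ)]).toBlocks₁₂ *
            (Matrix.fromBlocks !![1] !![1] !![1] !![(0:ℝ)]).toBlocks₂₂ ^ n *
            (Matrix.fromBlocks !![1] !![1] !![1] !![(0:ℝ)]).toBlocks₂₁
          = if n = 0 then !![(1:ℝ)] else 0 := by
        intro n
        have h22 : (Matrix.fromBlocks !![1] !![1] !![1] !![(0:ℝ)]).toBlocks₂₂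
            = (0 : Matrix (Fin 1) (Fin 1) ℝ) := by
          ext i j; fin_cases i; fin_cases j; simp
        rw [h22]
        cases n with
        | zero => ext i j; fin_cases i; fin_cases j; simp [Matrix.mul_apply, Fin.sum_univ_one]
        | succ n => simp [zero_pow]
      have key : ∀ N ≥ 1, (∑ n ∈ Finset.range N,
          (Matrix.fromBlocks !![1] !![1] !![1] !![(0:ℝ)]).toBlocks₁₂ *
            (Matrix.fromBlocks !![1] !![1] !![1] !![(0:ℝ)]).toBlocks₂₂ ^ n *
            (Matrix.fromBlocks !![1] !![1] !![1] !![(0:ℝ)]).toBlocks₂₁)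
          = !![(1:ℝ)] := by
        intro N hN
        rw [Finset.sum_eq_single_of_mem 0 (Finset.mem_range.mpr hN)]
        · rw [hterm 0]; simp
        · intro n _ hn; rw [hterm n, if_neg hn]
      exact tendsto_const_nhds.congr'
        ((Filter.eventually_atTop.mpr ⟨1, key⟩).mono fun N h => h.symm)
    · ext i j
      fin_cases i; fin_cases j
      simp [Matrix.toBlocks₁₁]
      norm_num
  · -- (iii)
    rintro ⟨S, hS⟩
    set M := exMatrix.toBlocks₂₂ with hM
    set a : ℕ → ℝ := fun n => (M ^ n) (Sum.inl 0) (Sum.inl 0) with ha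
    have hrec : ∀ n, a (n + 2) = -(3/2) * a (n + 1) + 2 * a n := by
      intro n
      have h : M ^ (n + 2) = (-(3/2) : ℝ) • M ^ (n + 1) + (2:ℝ) • M ^ n := by
        have : M ^ (n + 2) = M ^ n * M ^ 2 := by rw [← pow_add]
        rw [this, M_sq, Matrix.mul_add, Matrix.mul_smul, Matrix.mul_smul,
          Matrix.mul_one, ← pow_succ]
      simp only [ha, h, Matrix.add_apply, Matrix.smul_apply, smul_eq_mul]
    have hb : ∀ n, 1 ≤ (-1:ℝ)^n * a n ∧ 1 ≤ (-1:ℝ)^(n+1) * a (n+1) := by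
      intro n
      induction n with
      | zero =>
        constructor
        · simp [ha, Matrix.one_apply]
        · have : a 1 = -2 := by simp [ha, pow_one, hM, exMatrix, Matrix.toBlocks₂₂]
          rw [this]; norm_num
      | succ n ih =>
        refine ⟨ih.2, ?_⟩
        have key : (-1:ℝ)^(n+2) * a (n+2)
            = (3/2) * ((-1:ℝ)^(n+1) * a (n+1)) + 2 * ((-1:ℝ)^n * a n) := by
          rw [hrec n]; ring
        rw [key]
        linarith [ih.1, ih.2]
    have habs : ∀ n, 1 ≤ |a n| := by
      intro n
      calc 1 ≤ (-1:ℝ)^n * a n := (hb n).1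
        _ ≤ |(-1:ℝ)^n * a n| := le_abs_self _
        _ = |a n| := by rw [abs_mul, abs_pow, abs_neg, abs_one, one_pow, one_mul]
    -- terms of a convergent series tend to zero
    have h1 : Tendsto (fun N => (∑ n ∈ Finset.range (N+1),
        exMatrix.toBlocks₁₂ * M ^ n * exMatrix.toBlocks₂₁)
        - ∑ n ∈ Finset.range N, exMatrix.toBlocks₁₂ * M ^ n * exMatrix.toBlocks₂₁)
        atTop (nhds (S - S)) :=
      (hS.comp (tendsto_add_atTop_nat 1)).sub hS
    rw [sub_self] at h1
    have h2 : Tendsto (fun N => exMatrix.toBlocks₁₂ * M ^ N * exMatrix.toBlocks₂₁)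
        atTop (nhds 0) := by
      refine h1.congr fun N => ?_
      rw [Finset.sum_range_succ]
      abel
    have hc : Continuous fun A : Matrix (Fin 1) (Fin 1) ℝ => A 0 0 :=
      (continuous_apply (0 : Fin 1)).comp (continuous_apply (0 : Fin 1))
    have h3 : Tendsto (fun N =>
        ((exMatrix.toBlocks₁₂ * M ^ N * exMatrix.toBlocks₂₁ :
          Matrix (Fin 1) (Fin 1) ℝ)) 0 0)
        atTop (nhds 0) := by
      have := (hc.tendsto 0).comp h2
      simpa [Function.comp_def] using this
    have h4 : Tendsto a atTop (nhds 0) := h3.congr fun n => ex_term n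
    obtain ⟨N, hN⟩ := Metric.tendsto_atTop.mp h4 1 one_pos
    have := hN N le_rfl
    rw [Real.dist_eq, sub_zero] at this
    linarith [habs N]
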